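/- Let Ψ(w) = wᵀRw − wᵀμ̂ + Σ_i β_i|w_i| with R symmetric positive definite, all eigenvalues ≥ α₀ > 0, and β_i ≥ 0. Let M ≥ 2‖R‖₂ (operator norm), ε > 0, and η < min(ε, √(εα₀))/(√N · M). Suppose w̃ satisfies: (a) Σ_{i: |w̃_i| ≥ η, w̃_i ≠ 0} ((2Rw̃)_i − μ̂_i + β_i sgn(w̃_i))² ≤ 2εα₀, and (b) −β_i + ε ≤ (2Rw̃)_i − μ̂_i ≤ β_i − ε for every i with |w̃_i| < η. Define ζ by ζ_i = 0 if 0 < |w̃_i| < η or w̃_i = 0, and ζ_i = w̃_i otherwise. Then Ψ(ζ) ≤ Ψ(w*) + ((√2+1)²/2)·ε, where w* is the minimizer of Ψ. -/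

import Mathlib

open Matrix BigOperators Finset

set_option maxHeartbeats 1000000

lemma cs_sqrt {ι : Type*} (s : Finset ι) (f g : ι → ℝ) :
    ∑ i ∈ s, f i * g i ≤ Real.sqrt (∑ i ∈ s, f i ^ 2) * Real.sqrt (∑ i ∈ s, g i ^ 2) := by
  have h := Finset.sum_mul_sq_le_sq_mul_sq s f g
  have h1 : (0:ℝ) ≤ ∑ i ∈ s, f i ^ 2 := Finset.sum_nonneg fun i _ => sq_nonneg _
  calc ∑ i ∈ s, f i * g i ≤ |∑ i ∈ s, f i * g i| := le_abs_self _
    _ = Real.sqrt ((∑ i ∈ s, f i * g i) ^ 2) := (Real.sqrt_sq_eq_abs _).symm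
    _ ≤ Real.sqrt ((∑ i ∈ s, f i ^ 2) * ∑ i ∈ s, g i ^ 2) := Real.sqrt_le_sqrt h
    _ = _ := Real.sqrt_mul h1 _

lemma l2_triangle {ι : Type*} (s : Finset ι) (f g : ι → ℝ) :
    Real.sqrt (∑ i ∈ s, (f i + g i) ^ 2)
      ≤ Real.sqrt (∑ i ∈ s, f i ^ 2) + Real.sqrt (∑ i ∈ s, g i ^ 2) := by
  have h1 : (0:ℝ) ≤ ∑ i ∈ s, f i ^ 2 := Finset.sum_nonneg fun i _ => sq_nonneg _
  have h2 : (0:ℝ) ≤ ∑ i ∈ s, g i ^ 2 := Finset.sum_nonneg fun i _ => sq_nonneg _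
  have hcs := cs_sqrt s f g
  have hexp : ∑ i ∈ s, (f i + g i) ^ 2
      = (∑ i ∈ s, f i ^ 2) + 2 * (∑ i ∈ s, f i * g i) + ∑ i ∈ s, g i ^ 2 := by
    rw [Finset.mul_sum, ← Finset.sum_add_distrib, ← Finset.sum_add_distrib]
    apply Finset.sum_congr rfl; intro i _; ring
  have hle : ∑ i ∈ s, (f i + g i) ^ 2
      ≤ (Real.sqrt (∑ i ∈ s, f i ^ 2) + Real.sqrt (∑ i ∈ s, g i ^ 2)) ^ 2 := by
    have e1 : Real.sqrt (∑ i ∈ s, f i ^ 2) ^ 2 = ∑ i ∈ s, f i ^ 2 := Real.sq_sqrt h1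
    have e2 : Real.sqrt (∑ i ∈ s, g i ^ 2) ^ 2 = ∑ i ∈ s, g i ^ 2 := Real.sq_sqrt h2
    nlinarith [hcs, hexp]
  calc Real.sqrt (∑ i ∈ s, (f i + g i) ^ 2)
      ≤ Real.sqrt ((Real.sqrt (∑ i ∈ s, f i ^ 2) + Real.sqrt (∑ i ∈ s, g i ^ 2)) ^ 2) :=
        Real.sqrt_le_sqrt hle
    _ = _ := Real.sqrt_sq (by positivity)

/-- Theorem 3, practical stopping criterion: truncating the
small entries of an approximately stationary point `w̃` gives a portfolio `ζ`
with `Ψ(ζ) ≤ Ψ(w*) + ((√2+1)²/2)ε`.  The eigenvalue bound is expressed via the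
quadratic form and the operator-norm bound via `‖Rv‖ ≤ (M/2)‖v‖` in the
Euclidean norm. -/
theorem stmt16 (N : ℕ) (R : Matrix (Fin N) (Fin N) ℝ) (μ β : Fin N → ℝ)
    (hR : R.PosDef) (hβ : ∀ i, 0 ≤ β i)
    (α₀ : ℝ) (hα₀ : 0 < α₀)
    (heig : ∀ v : Fin N → ℝ, α₀ * ∑ i, (v i) ^ 2 ≤ v ⬝ᵥ (R *ᵥ v))
    (M : ℝ)
    (hM : ∀ v : Fin N → ℝ, Real.sqrt (∑ i, ((R *ᵥ v) i) ^ 2)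
        ≤ M / 2 * Real.sqrt (∑ i, (v i) ^ 2))
    (ε : ℝ) (hε : 0 < ε)
    (η : ℝ) (hη : η < min ε (Real.sqrt (ε * α₀)) / (Real.sqrt N * M))
    (Ψ : (Fin N → ℝ) → ℝ)
    (hΨ : ∀ w, Ψ w = w ⬝ᵥ (R *ᵥ w) - w ⬝ᵥ μ + ∑ i, β i * |w i|)
    (wstar wt : Fin N → ℝ) (hstar : ∀ v, Ψ wstar ≤ Ψ v)
    (ha : ∑ i ∈ Finset.univ.filter (fun i => wt i ≠ 0 ∧ η ≤ |wt i|),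
        (2 * (R *ᵥ wt) i - μ i + β i * Real.sign (wt i)) ^ 2 ≤ 2 * ε * α₀)
    (hb : ∀ i, (wt i = 0 ∨ |wt i| < η) →
        -β i + ε ≤ 2 * (R *ᵥ wt) i - μ i ∧ 2 * (R *ᵥ wt) i - μ i ≤ β i - ε)
    (ζ : Fin N → ℝ)
    (hζ : ∀ i, ζ i = if wt i = 0 ∨ |wt i| < η then 0 else wt i) :
    Ψ ζ ≤ Ψ wstar + (Real.sqrt 2 + 1) ^ 2 / 2 * ε := by
  classical
  rcases Nat.eq_zero_or_pos N with hN | hN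
  · subst hN
    have hζw : ζ = wstar := funext fun i => i.elim0
    have hpos : 0 < (Real.sqrt 2 + 1) ^ 2 / 2 * ε := by positivity
    rw [hζw]; linarith
  -- notation
  set d : Fin N → ℝ := fun i => ζ i - wt i with hd
  set q : Fin N → ℝ := fun i => 2 * (R *ᵥ d) i with hq
  set A : Fin N → ℝ := fun i => 2 * (R *ᵥ wt) i - μ i + β i * Real.sign (wt i) with hA
  set g : Fin N → ℝ := fun i => if wt i = 0 ∨ |wt i| < η then 0 else A i + q i with hg
  set e : Fin N → ℝ := fun i => wstar i - ζ i with he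
  -- symmetry of R
  have hsym : ∀ x y : Fin N → ℝ, x ⬝ᵥ (R *ᵥ y) = y ⬝ᵥ (R *ᵥ x) := by
    intro x y
    rw [Matrix.dotProduct_mulVec, ← Matrix.mulVec_transpose]
    rw [show Rᵀ = R from hR.isHermitian.eq]
    exact dotProduct_comm _ _
  -- M > 0
  have hMpos : 0 < M := by
    have h1 := heig (fun _ => 1)
    have h2 := hM (fun _ => 1)
    have hone : (∑ i : Fin N, ((fun _ => (1:ℝ)) i) ^ 2) = (N:ℝ) := by simp
    rw [hone] at h1 h2
    have hdp : (fun _ => (1:ℝ)) ⬝ᵥ (R *ᵥ fun _ => (1:ℝ))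
        = ∑ i, (1:ℝ) * (R *ᵥ fun _ => (1:ℝ)) i := rfl
    have hcs := cs_sqrt Finset.univ (fun _ => (1:ℝ)) (R *ᵥ fun _ => (1:ℝ))
    rw [hone] at hcs
    have hNpos : (0:ℝ) < (N:ℝ) := by exact_mod_cast hN
    have hsq : Real.sqrt (N:ℝ) ^ 2 = (N:ℝ) := Real.sq_sqrt hNpos.le
    have hsqpos : 0 < Real.sqrt (N:ℝ) := Real.sqrt_pos.mpr hNpos
    nlinarith [hdp, hcs, h1, h2, hsqpos, hsq]
  -- ζ = wt + d
  have hζwd : ζ = wt + d := by funext i; simp [hd]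
  have hRζ : ∀ i, (R *ᵥ ζ) i = (R *ᵥ wt) i + (R *ᵥ d) i := by
    intro i; rw [hζwd, Matrix.mulVec_add]; rfl
  -- bound on the small entries: d i ^ 2 ≤ (max η 0)^2
  set η' : ℝ := max η 0 with hη'
  have hd_bound : ∀ i, d i ^ 2 ≤ η' ^ 2 := by
    intro i
    by_cases hT : wt i = 0 ∨ |wt i| < η
    · have hζi : ζ i = 0 := by rw [hζ i, if_pos hT]
      have hdi : d i = -wt i := by simp [hd, hζi]
      rcases hT with h0 | hlt
      · rw [hdi, h0]; simpa using sq_nonneg η'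
      · have : |d i| ≤ η' := by
          rw [hdi, abs_neg]; exact le_trans hlt.le (le_max_left _ _)
        calc d i ^ 2 = |d i| ^ 2 := (sq_abs _).symm
          _ ≤ η' ^ 2 := by nlinarith [abs_nonneg (d i)]
    · have hζi : ζ i = wt i := by rw [hζ i, if_neg hT]
      have : d i = 0 := by simp [hd, hζi]
      rw [this]; simpa using sq_nonneg η'
  have hdsum : Real.sqrt (∑ i, d i ^ 2) ≤ Real.sqrt (N:ℝ) * η' := by
    have h1 : ∑ i, d i ^ 2 ≤ (N:ℝ) * η' ^ 2 := by
      calc ∑ i, d i ^ 2 ≤ ∑ _i : Fin N, η' ^ 2 := Finset.sum_le_sum fun i _ => hd_bound i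
        _ = (N:ℝ) * η' ^ 2 := by simp [mul_comm]
    calc Real.sqrt (∑ i, d i ^ 2) ≤ Real.sqrt ((N:ℝ) * η' ^ 2) := Real.sqrt_le_sqrt h1
      _ = Real.sqrt (N:ℝ) * η' := by
          rw [Real.sqrt_mul (Nat.cast_nonneg N), Real.sqrt_sq (le_max_right η 0)]
  -- bound on q
  have hqsum : Real.sqrt (∑ i, q i ^ 2) ≤ M * (Real.sqrt (N:ℝ) * η') := by
    have h4 : (∑ i, q i ^ 2) = 4 * ∑ i, ((R *ᵥ d) i) ^ 2 := by
      rw [Finset.mul_sum]; apply Finset.sum_congr rfl; intro i _; simp [hq]; ring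
    calc Real.sqrt (∑ i, q i ^ 2) = 2 * Real.sqrt (∑ i, ((R *ᵥ d) i) ^ 2) := by
          rw [h4, show (4:ℝ) = 2^2 by norm_num, Real.sqrt_mul (by positivity),
            Real.sqrt_sq (by norm_num : (0:ℝ) ≤ 2)]
      _ ≤ 2 * (M / 2 * Real.sqrt (∑ i, d i ^ 2)) := by
          have := hM d; linarith
      _ = M * Real.sqrt (∑ i, d i ^ 2) := by ring
      _ ≤ M * (Real.sqrt (N:ℝ) * η') := by
          exact mul_le_mul_of_nonneg_left hdsum hMpos.le
  have hqlt : Real.sqrt (∑ i, q i ^ 2) < min ε (Real.sqrt (ε * α₀)) := by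
    have hcpos : 0 < min ε (Real.sqrt (ε * α₀)) := by
      apply lt_min hε
      exact Real.sqrt_pos.mpr (by positivity)
    have hNpos : (0:ℝ) < Real.sqrt (N:ℝ) := Real.sqrt_pos.mpr (by exact_mod_cast hN)
    have hden : 0 < Real.sqrt (N:ℝ) * M := mul_pos hNpos hMpos
    have hlt : Real.sqrt (N:ℝ) * M * η < min ε (Real.sqrt (ε * α₀)) := by
      rw [mul_comm (Real.sqrt (N:ℝ) * M) η]
      exact (lt_div_iff₀ hden).mp hη
    rcases le_or_gt η 0 with h0 | h0
    · have : η' = 0 := max_eq_right h0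
      rw [this] at hqsum; simpa using lt_of_le_of_lt (by simpa using hqsum) hcpos
    · have : η' = η := max_eq_left h0.le
      rw [this] at hqsum
      calc Real.sqrt (∑ i, q i ^ 2) ≤ M * (Real.sqrt (N:ℝ) * η) := hqsum
        _ = Real.sqrt (N:ℝ) * M * η := by ring
        _ < _ := hlt
  have hqi : ∀ i, |q i| ≤ Real.sqrt (∑ j, q j ^ 2) := by
    intro i
    have h1 : q i ^ 2 ≤ ∑ j, q j ^ 2 :=
      Finset.single_le_sum (fun j _ => sq_nonneg (q j)) (Finset.mem_univ i)
    calc |q i| = Real.sqrt (q i ^ 2) := (Real.sqrt_sq_eq_abs _).symm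
      _ ≤ _ := Real.sqrt_le_sqrt h1
  -- quadratic expansion
  have hw : wstar = ζ + e := by funext i; simp [he]
  have hquad : wstar ⬝ᵥ (R *ᵥ wstar)
      = ζ ⬝ᵥ (R *ᵥ ζ) + 2 * (e ⬝ᵥ (R *ᵥ ζ)) + e ⬝ᵥ (R *ᵥ e) := by
    rw [hw, Matrix.mulVec_add, dotProduct_add, add_dotProduct,
      add_dotProduct, hsym ζ e]
    ring
  have hlin : wstar ⬝ᵥ μ = ζ ⬝ᵥ μ + e ⬝ᵥ μ := by
    rw [hw, add_dotProduct]
  -- key identity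
  have hkey : Ψ wstar = Ψ ζ + e ⬝ᵥ (R *ᵥ e)
      + (∑ i, (2 * (R *ᵥ ζ) i - μ i) * e i) + ∑ i, β i * (|wstar i| - |ζ i|) := by
    rw [hΨ, hΨ, hquad, hlin]
    have h1 : e ⬝ᵥ (R *ᵥ ζ) = ∑ i, (R *ᵥ ζ) i * e i := by
      rw [dotProduct]; apply Finset.sum_congr rfl; intro i _; ring
    have h2 : e ⬝ᵥ μ = ∑ i, μ i * e i := by
      rw [dotProduct]; apply Finset.sum_congr rfl; intro i _; ring
    have h3 : ∑ i, (2 * (R *ᵥ ζ) i - μ i) * e i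
        = 2 * (∑ i, (R *ᵥ ζ) i * e i) - ∑ i, μ i * e i := by
      rw [Finset.mul_sum, ← Finset.sum_sub_distrib]
      apply Finset.sum_congr rfl; intro i _; ring
    have h4 : ∑ i, β i * |wstar i| = (∑ i, β i * |ζ i|) + ∑ i, β i * (|wstar i| - |ζ i|) := by
      rw [← Finset.sum_add_distrib]
      apply Finset.sum_congr rfl; intro i _; ring
    rw [h1, h2, h3, h4]; ring
  -- termwise subgradient inequality
  have hterm : ∀ i, g i * e i ≤ (2 * (R *ᵥ ζ) i - μ i) * e i + β i * (|wstar i| - |ζ i|) := by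
    intro i
    by_cases hT : wt i = 0 ∨ |wt i| < η
    · have hζi : ζ i = 0 := by rw [hζ i, if_pos hT]
      have hgi : g i = 0 := by rw [hg]; simp only [if_pos hT]
      have hbnd := hb i hT
      have habs : |2 * (R *ᵥ ζ) i - μ i| ≤ β i := by
        have hqb : |q i| < ε := lt_of_le_of_lt (hqi i) (lt_of_lt_of_le hqlt (min_le_left _ _))
        have : 2 * (R *ᵥ ζ) i - μ i = (2 * (R *ᵥ wt) i - μ i) + q i := by
          rw [hRζ i]; simp [hq]; ring
        rw [this, abs_le]
        rw [abs_lt] at hqb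
        constructor <;> [linarith [hbnd.1]; linarith [hbnd.2]]
      have hei : e i = wstar i := by simp [he, hζi]
      rw [hgi, hζi, hei]
      rw [abs_le] at habs
      have h1 : 0 ≤ (β i - (2 * (R *ᵥ ζ) i - μ i)) * (|wstar i| - wstar i) :=
        mul_nonneg (by linarith [habs.2]) (by linarith [le_abs_self (wstar i)])
      have h2 : 0 ≤ (β i + (2 * (R *ᵥ ζ) i - μ i)) * (|wstar i| + wstar i) :=
        mul_nonneg (by linarith [habs.1]) (by linarith [neg_abs_le (wstar i)])
      simp only [abs_zero, sub_zero, zero_mul]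
      linarith [h1, h2]
    · have hζi : ζ i = wt i := by rw [hζ i, if_neg hT]
      have hgi : g i = A i + q i := by rw [hg]; simp only [if_neg hT]
      push_neg at hT
      have hwt0 : wt i ≠ 0 := hT.1
      have hcoef : 2 * (R *ᵥ ζ) i - μ i - g i = -(β i * Real.sign (wt i)) := by
        rw [hgi, hRζ i, hA, hq]; ring
      have hgoal : 0 ≤ (2 * (R *ᵥ ζ) i - μ i - g i) * e i + β i * (|wstar i| - |ζ i|) := by
        rw [hcoef, hζi]
        have hei : e i = wstar i - wt i := by rw [he]; simp [hζi]
        rw [hei]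
        rcases hwt0.lt_or_gt with hlt | hgt
        · rw [Real.sign_of_neg hlt, abs_of_neg hlt]
          have := mul_nonneg (hβ i) (by linarith [neg_abs_le (wstar i)] :
            0 ≤ |wstar i| + wstar i)
          linarith [this]
        · rw [Real.sign_of_pos hgt, abs_of_pos hgt]
          have := mul_nonneg (hβ i) (by linarith [le_abs_self (wstar i)] :
            0 ≤ |wstar i| - wstar i)
          linarith [this]
      linarith [hgoal]
  -- lower bound on Ψ wstar
  set E : ℝ := Real.sqrt (∑ i, e i ^ 2) with hE
  set G : ℝ := Real.sqrt (∑ i, g i ^ 2) with hG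
  have hsumge : ∑ i, g i * e i ≥ -(G * E) := by
    have hcs := cs_sqrt Finset.univ (fun i => -g i) e
    have hneg : ∑ i, (-g i) ^ 2 = ∑ i, g i ^ 2 := by
      apply Finset.sum_congr rfl; intro i _; ring
    rw [hneg] at hcs
    have : ∑ i, (-g i) * e i = -∑ i, g i * e i := by
      rw [← Finset.sum_neg_distrib]
      apply Finset.sum_congr rfl; intro i _; ring
    rw [this] at hcs
    linarith
  have hE2 : E ^ 2 = ∑ i, e i ^ 2 := Real.sq_sqrt (Finset.sum_nonneg fun i _ => sq_nonneg _)
  have hEnn : 0 ≤ E := Real.sqrt_nonneg _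
  have hGnn : 0 ≤ G := Real.sqrt_nonneg _
  have hlow : Ψ wstar ≥ Ψ ζ + α₀ * E ^ 2 - G * E := by
    have hquadlow := heig e
    have hsum_le : ∑ i, g i * e i
        ≤ (∑ i, (2 * (R *ᵥ ζ) i - μ i) * e i) + ∑ i, β i * (|wstar i| - |ζ i|) := by
      rw [← Finset.sum_add_distrib]
      exact Finset.sum_le_sum fun i _ => hterm i
    rw [hkey, hE2]
    linarith [hsumge]
  -- bound on G
  have hGbound : G ≤ (Real.sqrt 2 + 1) * Real.sqrt (ε * α₀) := by
    set a : Fin N → ℝ := fun i => if wt i = 0 ∨ |wt i| < η then 0 else A i with ha'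
    set b : Fin N → ℝ := fun i => if wt i = 0 ∨ |wt i| < η then 0 else q i with hb'
    have hgab : ∀ i, g i = a i + b i := by
      intro i; rw [hg, ha', hb']
      by_cases hT : wt i = 0 ∨ |wt i| < η <;> simp [hT]
    have hG' : G = Real.sqrt (∑ i, (a i + b i) ^ 2) := by
      rw [hG]; congr 1; apply Finset.sum_congr rfl; intro i _; rw [hgab i]
    have hasum : ∑ i, a i ^ 2 ≤ 2 * ε * α₀ := by
      have heq : ∑ i, a i ^ 2
          = ∑ i ∈ Finset.univ.filter (fun i => wt i ≠ 0 ∧ η ≤ |wt i|), A i ^ 2 := by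
        rw [Finset.sum_filter]
        apply Finset.sum_congr rfl; intro i _
        by_cases hT : wt i = 0 ∨ |wt i| < η
        · have hnot : ¬(wt i ≠ 0 ∧ η ≤ |wt i|) := by
            rintro ⟨h0, h1⟩
            rcases hT with h' | h'
            · exact h0 h'
            · exact absurd h1 (not_le.mpr h')
          simp [ha', hT, hnot]
        · have hT' : wt i ≠ 0 ∧ η ≤ |wt i| := by
            push_neg at hT; exact ⟨hT.1, hT.2⟩
          simp [ha', hT, hT']
      rw [heq]; exact ha
    have hbsum : ∑ i, b i ^ 2 ≤ ∑ i, q i ^ 2 := by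
      apply Finset.sum_le_sum; intro i _
      rw [hb']; by_cases hT : wt i = 0 ∨ |wt i| < η <;> simp [hT] <;> positivity
    have htri := l2_triangle Finset.univ a b
    have h1 : Real.sqrt (∑ i, a i ^ 2) ≤ Real.sqrt 2 * Real.sqrt (ε * α₀) := by
      calc Real.sqrt (∑ i, a i ^ 2) ≤ Real.sqrt (2 * ε * α₀) := Real.sqrt_le_sqrt hasum
        _ = Real.sqrt 2 * Real.sqrt (ε * α₀) := by
            rw [mul_assoc, Real.sqrt_mul (by norm_num)]
    have h2 : Real.sqrt (∑ i, b i ^ 2) ≤ Real.sqrt (ε * α₀) := by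
      calc Real.sqrt (∑ i, b i ^ 2) ≤ Real.sqrt (∑ i, q i ^ 2) := Real.sqrt_le_sqrt hbsum
        _ ≤ min ε (Real.sqrt (ε * α₀)) := hqlt.le
        _ ≤ Real.sqrt (ε * α₀) := min_le_right _ _
    calc G = Real.sqrt (∑ i, (a i + b i) ^ 2) := hG'
      _ ≤ Real.sqrt (∑ i, a i ^ 2) + Real.sqrt (∑ i, b i ^ 2) := htri
      _ ≤ Real.sqrt 2 * Real.sqrt (ε * α₀) + Real.sqrt (ε * α₀) := add_le_add h1 h2
      _ = (Real.sqrt 2 + 1) * Real.sqrt (ε * α₀) := by ring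
  -- final arithmetic
  have hs2 : Real.sqrt 2 ^ 2 = 2 := Real.sq_sqrt (by norm_num)
  have hs2nn : 0 ≤ Real.sqrt 2 := Real.sqrt_nonneg _
  have hsεα : Real.sqrt (ε * α₀) ^ 2 = ε * α₀ := Real.sq_sqrt (by positivity)
  have hG2 : G ^ 2 ≤ (Real.sqrt 2 + 1) ^ 2 * (ε * α₀) := by
    calc G ^ 2 ≤ ((Real.sqrt 2 + 1) * Real.sqrt (ε * α₀)) ^ 2 := by
          apply sq_le_sq' <;> nlinarith [Real.sqrt_nonneg (ε * α₀)]
      _ = (Real.sqrt 2 + 1) ^ 2 * (ε * α₀) := by rw [mul_pow, hsεα]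
  have h5 : G * E - α₀ * E ^ 2 ≤ G ^ 2 / (4 * α₀) := by
    rw [le_div_iff₀ (by positivity)]
    nlinarith [sq_nonneg (2 * α₀ * E - G)]
  have h6 : G ^ 2 / (4 * α₀) ≤ (Real.sqrt 2 + 1) ^ 2 / 2 * ε := by
    rw [div_le_iff₀ (by positivity)]
    nlinarith [hG2, mul_nonneg (mul_nonneg (sq_nonneg (Real.sqrt 2 + 1)) hε.le) hα₀.le]
  linarith [hlow, h5, h6]
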